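/- For δ ≥ 2 and t > 0, the series p^{(Y)}(t, x, y) = Σ_{n≥0} [(1 − y²)^{δ/2 − 1} C_n^{(δ/2 − 1/2)}(x) C_n^{(δ/2 − 1/2)}(y) / ∫_{−1}^1 (1 − y²)^{δ/2 − 1} C_n^{(δ/2 − 1/2)}(y)² dy] · exp(−(n/2)(n + δ − 1) t) converges uniformly (in x, y) on [−1, 1]² . -/

import Mathlib

open Filter Set Topology Polynomial

noncomputable section

/-- The Gegenbauer (ultraspherical) polynomial `C_n^{(α)}`, defined by the standard
recurrence `C_0 = 1`, `C_1 = 2αx`, `n C_n = 2x(n + α − 1) C_{n−1} − (n + 2α − 2) C_{n−2}`. -/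
def gegenbauer (α : ℝ) : ℕ → Polynomial ℝ
  | 0 => 1
  | 1 => Polynomial.C (2 * α) * Polynomial.X
  | n + 2 =>
      Polynomial.C (2 * ((n : ℝ) + 1 + α) / ((n : ℝ) + 2)) * Polynomial.X
          * gegenbauer α (n + 1)
        - Polynomial.C (((n : ℝ) + 2 * α) / ((n : ℝ) + 2)) * gegenbauer α n

lemma geg_bound_pair (α : ℝ) (hα : (1:ℝ)/2 ≤ α) (n : ℕ) :
    (∀ y : ℝ, |y| ≤ 1 → |(gegenbauer α n).eval y| ≤ (4*α+4)^n ∧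
       |((gegenbauer α n).derivative).eval y| ≤ (n:ℝ) * (4*α+4)^n) ∧
    (∀ y : ℝ, |y| ≤ 1 → |(gegenbauer α (n+1)).eval y| ≤ (4*α+4)^(n+1) ∧
       |((gegenbauer α (n+1)).derivative).eval y| ≤ ((n:ℝ)+1) * (4*α+4)^(n+1)) := by
  have hL1 : (1:ℝ) ≤ 4*α+4 := by linarith
  induction n with
  | zero =>
    constructor
    · intro y hy
      constructor
      · simp [gegenbauer]
      · simp [gegenbauer]
    · intro y hy
      constructor
      · have h1 : (gegenbauer α 1).eval y = 2*α*y := by simp [gegenbauer]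
        rw [h1, pow_one, abs_mul, abs_of_nonneg (by linarith : (0:ℝ) ≤ 2*α)]
        nlinarith [abs_nonneg y]
      · have h1 : ((gegenbauer α 1).derivative).eval y = 2*α := by simp [gegenbauer]
        rw [h1, abs_of_nonneg (by linarith : (0:ℝ) ≤ 2*α)]
        push_cast
        nlinarith
  | succ n ih =>
    constructor
    · intro y hy
      have := ih.2 y hy
      push_cast at this ⊢
      exact this
    intro y hy
    obtain ⟨e1, d1⟩ := ih.2 y hy
    obtain ⟨e0, d0⟩ := ih.1 y hy
    have hn2 : (0:ℝ) < (n:ℝ) + 2 := by positivity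
    set a := 2*((n:ℝ)+1+α)/((n:ℝ)+2) with hadef
    set b := ((n:ℝ)+2*α)/((n:ℝ)+2) with hbdef
    have ha0 : 0 ≤ a := by rw [hadef]; positivity
    have hb0 : 0 ≤ b := by rw [hbdef]; positivity
    have ha' : |a| ≤ 2*α+2 := by
      rw [abs_of_nonneg ha0, hadef, div_le_iff₀ hn2]; nlinarith
    have hb' : |b| ≤ 2*α+2 := by
      rw [abs_of_nonneg hb0, hbdef, div_le_iff₀ hn2]; nlinarith
    have hpow0 : (4*α+4)^n ≤ (4*α+4)^(n+1) := pow_le_pow_right₀ hL1 (by omega)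
    have hps : (4*α+4)^(n+1+1) = (4*α+4) * (4*α+4)^(n+1) := by ring
    have hpowpos : (0:ℝ) < (4*α+4)^(n+1) := by positivity
    have hA0 : (0:ℝ) ≤ 2*α+2 := by linarith
    constructor
    · have hev : (gegenbauer α (n+2)).eval y
          = a * y * (gegenbauer α (n+1)).eval y - b * (gegenbauer α n).eval y := by
        simp [gegenbauer, hadef, hbdef]
      rw [hev]
      have h1 : |a| * |y| ≤ (2*α+2) * 1 := mul_le_mul ha' hy (abs_nonneg y) hA0
      have h2 : |a| * |y| * |(gegenbauer α (n+1)).eval y| ≤ (2*α+2) * 1 * (4*α+4)^(n+1) :=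
        mul_le_mul h1 e1 (abs_nonneg _) (by positivity)
      have h3 : |b| * |(gegenbauer α n).eval y| ≤ (2*α+2) * (4*α+4)^n :=
        mul_le_mul hb' e0 (abs_nonneg _) hA0
      calc |a * y * (gegenbauer α (n+1)).eval y - b * (gegenbauer α n).eval y|
          ≤ |a * y * (gegenbauer α (n+1)).eval y| + |b * (gegenbauer α n).eval y| := abs_sub _ _
        _ = |a| * |y| * |(gegenbauer α (n+1)).eval y| + |b| * |(gegenbauer α n).eval y| := by
            rw [abs_mul, abs_mul, abs_mul]
        _ ≤ (4*α+4)^(n+1+1) := by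
            nlinarith [mul_le_mul_of_nonneg_left hpow0 hA0]
    · have hev : ((gegenbauer α (n+2)).derivative).eval y
          = a * ((gegenbauer α (n+1)).eval y + y * ((gegenbauer α (n+1)).derivative).eval y)
            - b * ((gegenbauer α n).derivative).eval y := by
        simp [gegenbauer, Polynomial.derivative_mul, hadef, hbdef]
        ring
      rw [hev]
      push_cast
      have hX : |(gegenbauer α (n+1)).eval y + y * ((gegenbauer α (n+1)).derivative).eval y|
          ≤ (4*α+4)^(n+1) + ((n:ℝ)+1) * (4*α+4)^(n+1) := by
        have t1 := abs_add_le ((gegenbauer α (n+1)).eval y)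
          (y * ((gegenbauer α (n+1)).derivative).eval y)
        rw [abs_mul] at t1
        have t2 : |y| * |((gegenbauer α (n+1)).derivative).eval y|
            ≤ 1 * (((n:ℝ)+1) * (4*α+4)^(n+1)) :=
          mul_le_mul hy d1 (abs_nonneg _) zero_le_one
        nlinarith
      have h2 : |a| * |(gegenbauer α (n+1)).eval y + y * ((gegenbauer α (n+1)).derivative).eval y|
          ≤ (2*α+2) * ((4*α+4)^(n+1) + ((n:ℝ)+1) * (4*α+4)^(n+1)) :=
        mul_le_mul ha' hX (abs_nonneg _) hA0
      have h3 : |b| * |((gegenbauer α n).derivative).eval y| ≤ (2*α+2) * ((n:ℝ) * (4*α+4)^n) :=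
        mul_le_mul hb' d0 (abs_nonneg _) hA0
      calc |a * ((gegenbauer α (n+1)).eval y + y * ((gegenbauer α (n+1)).derivative).eval y)
            - b * ((gegenbauer α n).derivative).eval y|
          ≤ |a * ((gegenbauer α (n+1)).eval y + y * ((gegenbauer α (n+1)).derivative).eval y)|
            + |b * ((gegenbauer α n).derivative).eval y| := abs_sub _ _
        _ = |a| * |(gegenbauer α (n+1)).eval y + y * ((gegenbauer α (n+1)).derivative).eval y|
            + |b| * |((gegenbauer α n).derivative).eval y| := by rw [abs_mul, abs_mul]
        _ ≤ ((n:ℝ)+1+1) * (4*α+4)^(n+1+1) := by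
            nlinarith [mul_le_mul_of_nonneg_left hpow0
              (by positivity : (0:ℝ) ≤ (2*α+2)*(n:ℝ))]

lemma geg_eval_le (α : ℝ) (hα : (1:ℝ)/2 ≤ α) (n : ℕ) (y : ℝ) (hy : |y| ≤ 1) :
    |(gegenbauer α n).eval y| ≤ (4*α+4)^n :=
  ((geg_bound_pair α hα n).1 y hy).1

lemma geg_deriv_le (α : ℝ) (hα : (1:ℝ)/2 ≤ α) (n : ℕ) (y : ℝ) (hy : |y| ≤ 1) :
    |((gegenbauer α n).derivative).eval y| ≤ (n:ℝ) * (4*α+4)^n :=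
  ((geg_bound_pair α hα n).1 y hy).2

lemma geg_one_pair (α : ℝ) (hα : (1:ℝ)/2 ≤ α) (n : ℕ) :
    1 ≤ (gegenbauer α n).eval 1 ∧ (gegenbauer α n).eval 1 ≤ (gegenbauer α (n+1)).eval 1 := by
  induction n with
  | zero =>
    constructor
    · simp [gegenbauer]
    · have h1 : (gegenbauer α 1).eval 1 = 2*α := by simp [gegenbauer]
      have h0 : (gegenbauer α 0).eval 1 = 1 := by simp [gegenbauer]
      rw [h0, h1]; linarith
  | succ n ih =>
    have hn2 : ((n:ℝ)+2) ≠ 0 := by positivity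
    have hev : (gegenbauer α (n+2)).eval 1
        = (gegenbauer α (n+1)).eval 1
          + ((n:ℝ)+2*α)/((n:ℝ)+2) * ((gegenbauer α (n+1)).eval 1 - (gegenbauer α n).eval 1) := by
      simp only [gegenbauer, Polynomial.eval_sub, Polynomial.eval_mul, Polynomial.eval_C,
        Polynomial.eval_X, mul_one]
      field_simp
      ring
    have hb0 : 0 ≤ ((n:ℝ)+2*α)/((n:ℝ)+2) := by positivity
    constructor
    · linarith [ih.1, ih.2]
    · show (gegenbauer α (n+1)).eval 1 ≤ (gegenbauer α (n+2)).eval 1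
      rw [hev]
      nlinarith [ih.2]

lemma geg_near_one (α : ℝ) (hα : (1:ℝ)/2 ≤ α) (n : ℕ) (y : ℝ)
    (hy : 1 - 1/(2*((n:ℝ)+1)*(4*α+4)^(n+1)) ≤ y) (hy1 : y ≤ 1) :
    1/2 ≤ (gegenbauer α n).eval y := by
  have hL1 : (1:ℝ) ≤ 4*α+4 := by linarith
  have hn0 : (0:ℝ) ≤ (n:ℝ) := Nat.cast_nonneg n
  have hone : (1:ℝ) ≤ (4*α+4)^(n+1) := by
    calc (1:ℝ) = (4*α+4)^0 := by rw [pow_zero]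
    _ ≤ (4*α+4)^(n+1) := pow_le_pow_right₀ hL1 (Nat.zero_le _)
  have hεle : 1/(2*((n:ℝ)+1)*(4*α+4)^(n+1)) ≤ 1 := by
    rw [div_le_one (by positivity)]
    nlinarith
  have hyabs : ∀ x : ℝ, y ≤ x → x ≤ 1 → |x| ≤ 1 := fun x hx1 hx2 =>
    abs_le.2 ⟨by linarith, hx2⟩
  -- mean value theorem on [y, 1]
  have hmvt := norm_image_sub_le_of_norm_deriv_le_segment'
    (f := fun x => (gegenbauer α n).eval x)
    (f' := fun x => ((gegenbauer α n).derivative).eval x)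
    (a := y) (b := 1) (C := (n:ℝ) * (4*α+4)^n)
    (fun x _ => (Polynomial.hasDerivAt (gegenbauer α n) x).hasDerivWithinAt)
    (fun x hx => by
      rw [Real.norm_eq_abs]
      exact geg_deriv_le α hα n x (hyabs x hx.1 (le_of_lt hx.2)))
    1 (Set.right_mem_Icc.2 hy1)
  rw [Real.norm_eq_abs] at hmvt
  have hC : (n:ℝ) * (4*α+4)^n * (1 - y) ≤ 1/2 := by
    have hstep : (n:ℝ) * (4*α+4)^n ≤ ((n:ℝ)+1) * (4*α+4)^(n+1) := by
      have := pow_le_pow_right₀ hL1 (show n ≤ n+1 by omega)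
      nlinarith [pow_nonneg (by linarith : (0:ℝ) ≤ 4*α+4) n]
    have h1y : 1 - y ≤ 1/(2*((n:ℝ)+1)*(4*α+4)^(n+1)) := by linarith
    have h1y0 : 0 ≤ 1 - y := by linarith
    have hd : (0:ℝ) < ((n:ℝ)+1) * (4*α+4)^(n+1) := by positivity
    calc (n:ℝ) * (4*α+4)^n * (1 - y)
        ≤ (((n:ℝ)+1) * (4*α+4)^(n+1)) * (1/(2*((n:ℝ)+1)*(4*α+4)^(n+1))) := by
          apply mul_le_mul hstep h1y h1y0 (le_of_lt hd)
      _ = 1/2 := by field_simp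
  have hone' := (geg_one_pair α hα n).1
  have habs := abs_le.1 hmvt
  linarith [habs.1, habs.2]

def geps (α : ℝ) (n : ℕ) : ℝ := 1/(2*((n:ℝ)+1)*(4*α+4)^(n+1))

def glb (α : ℝ) (n : ℕ) : ℝ := (geps α n / 2)^(α+1/2)/4

lemma geps_pos (α : ℝ) (hα : (1:ℝ)/2 ≤ α) (n : ℕ) : 0 < geps α n := by
  unfold geps
  have : (0:ℝ) < 4*α+4 := by linarith
  positivity

lemma glb_pos (α : ℝ) (hα : (1:ℝ)/2 ≤ α) (n : ℕ) : 0 < glb α n := by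
  have h := geps_pos α hα n
  unfold glb
  positivity

lemma geps_le_half (α : ℝ) (hα : (1:ℝ)/2 ≤ α) (n : ℕ) : geps α n ≤ 1/2 := by
  unfold geps
  have hL1 : (1:ℝ) ≤ 4*α+4 := by linarith
  have hone : (1:ℝ) ≤ (4*α+4)^(n+1) := by
    calc (1:ℝ) = (4*α+4)^0 := by rw [pow_zero]
    _ ≤ (4*α+4)^(n+1) := pow_le_pow_right₀ hL1 (Nat.zero_le _)
  have hn0 : (0:ℝ) ≤ (n:ℝ) := Nat.cast_nonneg n
  rw [div_le_div_iff₀ (by positivity) (by norm_num)]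
  nlinarith

lemma cont_w (q : ℝ) (hq : 0 ≤ q) : Continuous fun y : ℝ => (1 - y^2)^q :=
  continuous_iff_continuousAt.2 fun _ =>
    ((continuous_const.sub (continuous_pow 2)).continuousAt).rpow_const (Or.inr hq)

lemma integral_lb (α : ℝ) (hα : (1:ℝ)/2 ≤ α) (n : ℕ) :
    glb α n ≤ ∫ y in (-1:ℝ)..1, (1 - y^2)^(α - 1/2) * ((gegenbauer α n).eval y)^2 := by
  have hq : (0:ℝ) ≤ α - 1/2 := by linarith
  have hε := geps_pos α hα n
  have hεh := geps_le_half α hα n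
  set e := geps α n with hedef
  set a := 1 - e with hadef
  set b := 1 - e/2 with hbdef
  have hab : a ≤ b := by rw [hadef, hbdef]; linarith
  have hcont : Continuous fun y : ℝ => (1 - y^2)^(α - 1/2) * ((gegenbauer α n).eval y)^2 :=
    (cont_w _ hq).mul ((gegenbauer α n).continuous.pow 2)
  have hptwise : ∀ y ∈ Icc a b,
      (e/2)^(α-1/2) * (1/4) ≤ (1 - y^2)^(α - 1/2) * ((gegenbauer α n).eval y)^2 := by
    intro y hy
    have hy1 : a ≤ y := hy.1
    have hy2 : y ≤ b := hy.2
    have hyb : y ≤ 1 := by rw [hbdef] at hy2; linarith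
    have hya : 1 - e ≤ y := by rw [hadef] at hy1; linarith
    have hyhalf : 1/2 ≤ y := by linarith
    have hbase : e/2 ≤ 1 - y^2 := by
      have t1 : (1-y)*1 ≤ (1-y)*(1+y) := by
        apply mul_le_mul_of_nonneg_left (by linarith) (by linarith)
      have t2 : e/2 ≤ 1 - y := by rw [hbdef] at hy2; linarith
      nlinarith [t1, t2]
    have hw : (e/2)^(α-1/2) ≤ (1 - y^2)^(α - 1/2) :=
      Real.rpow_le_rpow (by linarith) hbase hq
    have hev : 1/2 ≤ (gegenbauer α n).eval y := geg_near_one α hα n y hya hyb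
    have hsq : (1/4 : ℝ) ≤ ((gegenbauer α n).eval y)^2 := by nlinarith
    have hwnn : (0:ℝ) ≤ (e/2)^(α-1/2) := Real.rpow_nonneg (by linarith) _
    calc (e/2)^(α-1/2) * (1/4) ≤ (1 - y^2)^(α - 1/2) * (1/4) := by
          apply mul_le_mul_of_nonneg_right hw (by norm_num)
      _ ≤ (1 - y^2)^(α - 1/2) * ((gegenbauer α n).eval y)^2 := by
          apply mul_le_mul_of_nonneg_left hsq (Real.rpow_nonneg (by nlinarith) _)
  have h1 : (b - a) • ((e/2)^(α-1/2) * (1/4))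
      ≤ ∫ y in a..b, (1 - y^2)^(α - 1/2) * ((gegenbauer α n).eval y)^2 := by
    rw [← intervalIntegral.integral_const]
    exact intervalIntegral.integral_mono_on hab (intervalIntegrable_const)
      (hcont.intervalIntegrable a b) hptwise
  have hnonneg : 0 ≤ᵐ[MeasureTheory.volume.restrict (Ioc (-1:ℝ) 1)]
      fun y => (1 - y^2)^(α - 1/2) * ((gegenbauer α n).eval y)^2 := by
    filter_upwards [MeasureTheory.ae_restrict_mem measurableSet_Ioc] with y hy
    have h0 : (0:ℝ) ≤ 1 - y^2 := by nlinarith [hy.1, hy.2]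
    exact mul_nonneg (Real.rpow_nonneg h0 _) (sq_nonneg _)
  have h2 : (∫ y in a..b, (1 - y^2)^(α - 1/2) * ((gegenbauer α n).eval y)^2)
      ≤ ∫ y in (-1:ℝ)..1, (1 - y^2)^(α - 1/2) * ((gegenbauer α n).eval y)^2 :=
    intervalIntegral.integral_mono_interval (by rw [hadef]; linarith) hab
      (by rw [hbdef]; linarith) hnonneg (hcont.intervalIntegrable _ _)
  have hglb : glb α n = (b - a) • ((e/2)^(α-1/2) * (1/4)) := by
    rw [hbdef, hadef, smul_eq_mul]
    have : b - a = e/2 := by rw [hbdef, hadef]; ring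
    unfold glb
    rw [← hedef]
    rw [show α + 1/2 = (α - 1/2) + 1 by ring, Real.rpow_add_one (by positivity : e/2 ≠ 0)]
    ring
  rw [hglb]
  exact le_trans h1 h2

lemma u_summable (α t : ℝ) (hα : (1:ℝ)/2 ≤ α) (ht : 0 < t) :
    Summable (fun n : ℕ => (4*α+4)^(2*n) / glb α n * Real.exp (-(n:ℝ)^2*t/2)) := by
  set L : ℝ := 4*α+4 with hLdef
  have hLpos : (0:ℝ) < L := by rw [hLdef]; linarith
  have hL1 : (1:ℝ) ≤ L := by rw [hLdef]; linarith
  have hq1 : (0:ℝ) ≤ α + 1/2 := by linarith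
  set G : ℝ := L^2 * (2*L)^(α+1/2) with hGdef
  have hGpos : 0 < G := by
    rw [hGdef]
    exact mul_pos (by positivity) (Real.rpow_pos_of_pos (by linarith) _)
  set K : ℝ := Real.log (2*G) with hKdef
  have hexpK : Real.exp K = 2*G := Real.exp_log (by linarith)
  set C0 : ℝ := 4 * (4*L)^(α+1/2) with hC0def
  have hC0pos : 0 < C0 := by
    rw [hC0def]
    exact mul_pos (by norm_num) (Real.rpow_pos_of_pos (by linarith) _)
  have key : ∀ n : ℕ, L^(2*n) / glb α n * Real.exp (-(n:ℝ)^2*t/2)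
      ≤ (C0 * Real.exp (K^2/(2*t))) * (1/2)^n := by
    intro n
    have hn0 : (0:ℝ) ≤ (n:ℝ) := Nat.cast_nonneg n
    have hd : (0:ℝ) < 4*((n:ℝ)+1)*L^(n+1) := by positivity
    have hehalf : geps α n / 2 = (4*((n:ℝ)+1)*L^(n+1))⁻¹ := by
      unfold geps
      rw [← hLdef]
      field_simp
      ring
    have hglb : glb α n = ((4*((n:ℝ)+1)*L^(n+1))^(α+1/2))⁻¹ / 4 := by
      unfold glb
      rw [hehalf, Real.inv_rpow hd.le]
    have hX : (0:ℝ) < (4*((n:ℝ)+1)*L^(n+1))^(α+1/2) := Real.rpow_pos_of_pos hd _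
    have hrw : L^(2*n) / glb α n = L^(2*n) * 4 * (4*((n:ℝ)+1)*L^(n+1))^(α+1/2) := by
      rw [hglb]
      field_simp
    have hXle : (4*((n:ℝ)+1)*L^(n+1))^(α+1/2) ≤ (4*L)^(α+1/2) * ((2*L)^(α+1/2))^n := by
      have h2n : ((n:ℝ)+1) ≤ 2^n := by
        exact_mod_cast Nat.succ_le_of_lt ((Nat.lt_two_pow_self (n := n)))
      have hLn : (0:ℝ) ≤ L^n := by positivity
      have hmul := mul_le_mul_of_nonneg_right h2n hLn
      have hbase : 4*((n:ℝ)+1)*L^(n+1) ≤ (4*L)*(2*L)^n := by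
        calc 4*((n:ℝ)+1)*L^(n+1) = (4*L)*(((n:ℝ)+1)*L^n) := by ring
          _ ≤ (4*L)*((2:ℝ)^n*L^n) := by
              apply mul_le_mul_of_nonneg_left hmul (by positivity)
          _ = (4*L)*(2*L)^n := by rw [mul_pow]
      calc (4*((n:ℝ)+1)*L^(n+1))^(α+1/2) ≤ ((4*L)*(2*L)^n)^(α+1/2) :=
          Real.rpow_le_rpow hd.le hbase hq1
        _ = (4*L)^(α+1/2) * ((2*L)^n)^(α+1/2) := Real.mul_rpow (by positivity) (by positivity)
        _ = (4*L)^(α+1/2) * ((2*L)^(α+1/2))^n := by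
            rw [← Real.rpow_natCast (2*L) n, ← Real.rpow_mul (by linarith), mul_comm ((n:ℝ)) (α+1/2),
              Real.rpow_mul (by linarith), Real.rpow_natCast]
    have hexp : Real.exp (-(n:ℝ)^2*t/2) ≤ Real.exp (K^2/(2*t)) * (1/(2*G))^n := by
      have h1 : -(n:ℝ)^2*t/2 ≤ K^2/(2*t) + (n:ℝ)*(-K) := by
        rw [← sub_nonneg]
        have expand : K^2/(2*t) + (n:ℝ)*(-K) - (-(n:ℝ)^2*t/2) = (K - (n:ℝ)*t)^2/(2*t) := by
          field_simp
          ring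
        rw [expand]
        positivity
      calc Real.exp (-(n:ℝ)^2*t/2) ≤ Real.exp (K^2/(2*t) + (n:ℝ)*(-K)) := Real.exp_le_exp.2 h1
        _ = Real.exp (K^2/(2*t)) * (Real.exp (-K))^n := by
            rw [Real.exp_add, Real.exp_nat_mul]
        _ = Real.exp (K^2/(2*t)) * (1/(2*G))^n := by
            rw [Real.exp_neg, hexpK, one_div]
    have hhalf : (L^2 * (2*L)^(α+1/2)) * (1/(2*G)) = 1/2 := by
      rw [← hGdef]
      field_simp
    calc L^(2*n) / glb α n * Real.exp (-(n:ℝ)^2*t/2)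
        = L^(2*n) * 4 * (4*((n:ℝ)+1)*L^(n+1))^(α+1/2) * Real.exp (-(n:ℝ)^2*t/2) := by
          rw [hrw]
      _ ≤ L^(2*n) * 4 * ((4*L)^(α+1/2) * ((2*L)^(α+1/2))^n)
            * (Real.exp (K^2/(2*t)) * (1/(2*G))^n) := by
          apply mul_le_mul (mul_le_mul_of_nonneg_left hXle (by positivity)) hexp
            (Real.exp_nonneg _) (by positivity)
      _ = (C0 * Real.exp (K^2/(2*t))) * ((L^2 * (2*L)^(α+1/2)) * (1/(2*G)))^n := by
          rw [hC0def, mul_pow, mul_pow, pow_mul]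
          ring
      _ = (C0 * Real.exp (K^2/(2*t))) * (1/2)^n := by rw [hhalf]
  have hgeo : Summable (fun n : ℕ => (C0 * Real.exp (K^2/(2*t))) * (1/2)^n) :=
    (summable_geometric_of_lt_one (by norm_num) (by norm_num)).mul_left _
  exact hgeo.of_nonneg_of_le
    (fun n => mul_nonneg (div_nonneg (by positivity) (glb_pos α hα n).le) (Real.exp_nonneg _)) key

/-- For `δ ≥ 2` and `t > 0`, the Gegenbauer eigenfunction expansion of the transition
density `p^{(Y)}(t, x, y)` converges uniformly in `(x, y) ∈ [−1, 1]²`. -/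
theorem transitionDensity_series_unifConv (δ t : ℝ) (hδ : 2 ≤ δ) (ht : 0 < t) :
    ∃ F : ℝ × ℝ → ℝ,
      TendstoUniformlyOn
        (fun (N : ℕ) (p : ℝ × ℝ) => ∑ n ∈ Finset.range N,
          (1 - p.2 ^ 2) ^ (δ / 2 - 1)
            * (gegenbauer (δ / 2 - 1 / 2) n).eval p.1
            * (gegenbauer (δ / 2 - 1 / 2) n).eval p.2
            / (∫ y in (-1 : ℝ)..1,
                (1 - y ^ 2) ^ (δ / 2 - 1) * ((gegenbauer (δ / 2 - 1 / 2) n).eval y) ^ 2)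
            * Real.exp (-((n : ℝ) / 2) * ((n : ℝ) + δ - 1) * t))
        F atTop (Icc (-1 : ℝ) 1 ×ˢ Icc (-1 : ℝ) 1) := by
  have hα : (1:ℝ)/2 ≤ δ/2 - 1/2 := by linarith
  set α : ℝ := δ/2 - 1/2 with hαdef
  have hqrw : δ/2 - 1 = α - 1/2 := by rw [hαdef]; ring
  simp only [hqrw]
  refine ⟨_, tendstoUniformlyOn_tsum_nat (u_summable α t hα ht) ?_⟩
  rintro n ⟨x, y⟩ hp
  obtain ⟨hx, hy⟩ := hp
  have hxabs : |x| ≤ 1 := abs_le.2 ⟨hx.1, hx.2⟩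
  have hyabs : |y| ≤ 1 := abs_le.2 ⟨hy.1, hy.2⟩
  have hn0 : (0:ℝ) ≤ (n:ℝ) := Nat.cast_nonneg n
  have hI := integral_lb α hα n
  have hglb := glb_pos α hα n
  have hIpos : 0 < ∫ z in (-1:ℝ)..1, (1 - z^2)^(α - 1/2) * ((gegenbauer α n).eval z)^2 :=
    lt_of_lt_of_le hglb hI
  have hx' := geg_eval_le α hα n x hxabs
  have hy' := geg_eval_le α hα n y hyabs
  have hw0 : (0:ℝ) ≤ 1 - y^2 := by nlinarith [hy.1, hy.2]
  have hw1 : (1 - y^2)^(α - 1/2) ≤ 1 :=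
    Real.rpow_le_one hw0 (by nlinarith [hy.1, hy.2]) (by linarith)
  have hwnn : 0 ≤ (1 - y^2)^(α - 1/2) := Real.rpow_nonneg hw0 _
  have hN : |(1 - y^2)^(α - 1/2) * (gegenbauer α n).eval x * (gegenbauer α n).eval y|
      ≤ (4*α+4)^(2*n) := by
    rw [abs_mul, abs_mul, abs_of_nonneg hwnn]
    calc (1 - y^2)^(α - 1/2) * |(gegenbauer α n).eval x| * |(gegenbauer α n).eval y|
        ≤ 1 * (4*α+4)^n * (4*α+4)^n := by
          apply mul_le_mul (mul_le_mul hw1 hx' (abs_nonneg _) zero_le_one) hy'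
            (abs_nonneg _) (by positivity)
      _ = (4*α+4)^(2*n) := by rw [two_mul, pow_add]; ring
  have hdiv : |(1 - y^2)^(α - 1/2) * (gegenbauer α n).eval x * (gegenbauer α n).eval y|
        / (∫ z in (-1:ℝ)..1, (1 - z^2)^(α - 1/2) * ((gegenbauer α n).eval z)^2)
      ≤ (4*α+4)^(2*n) / glb α n :=
    div_le_div₀ (by positivity) hN hglb hI
  have hexp : Real.exp (-((n:ℝ)/2) * ((n:ℝ) + δ - 1) * t) ≤ Real.exp (-(n:ℝ)^2*t/2) := by
    apply Real.exp_le_exp.2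
    nlinarith [mul_nonneg (mul_nonneg hn0 (by linarith : (0:ℝ) ≤ δ - 1)) ht.le]
  rw [Real.norm_eq_abs, abs_mul, abs_div, abs_of_pos hIpos, Real.abs_exp]
  exact mul_le_mul hdiv hexp (Real.exp_nonneg _)
    (div_nonneg (by positivity) hglb.le)
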